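/- Let G be a simple graph on n vertices, let c : V(G) → ℤ⁺ be a vertex assignment, and let μ = min_{v ∈ V(G)} c(v). Then for every real (or integer) a, the number of nonempty vertex subsets s ⊆ V(G) inducing a connected subgraph of G whose sum Σ_{v ∈ s} c(v) lies in the half-open interval [a, a + μ) is at most the binomial coefficient C(n, ⌊n/2⌋). In particular, |S(G,c) ∩ [a, a + μ)| ≤ C(n, ⌊n/2⌋). -/

import Mathlib

/-- The set of connected subgraph sums of `G` with vertex assignment `c`. -/
def connSums {V : Type*} [Fintype V] (G : SimpleGraph V) (c : V → ℕ) : Set ℕ :=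
  {N | ∃ s : Finset V, s.Nonempty ∧ (G.induce (↑s : Set V)).Connected ∧ ∑ v ∈ s, c v = N}

/-- With `μ = min_v c(v)`, at most `C(n, ⌊n/2⌋)` nonempty connected vertex subsets of an
`n`-vertex graph have weight in `[a, a + μ)`; in particular
`|S(G,c) ∩ [a, a + μ)| ≤ C(n, ⌊n/2⌋)`. -/
theorem stmt_14 {V : Type*} [Fintype V] [Nonempty V] (n : ℕ) (hn : Fintype.card V = n)
    (G : SimpleGraph V) (c : V → ℕ) (hc : ∀ v, 0 < c v) (a : ℕ) :
    letI μ : ℕ := Finset.univ.inf' Finset.univ_nonempty c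
    {s : Finset V | s.Nonempty ∧ (G.induce (↑s : Set V)).Connected ∧
        (∑ v ∈ s, c v) ∈ Set.Ico a (a + μ)}.ncard ≤ n.choose (n / 2) ∧
      (connSums G c ∩ Set.Ico a (a + μ)).ncard ≤ n.choose (n / 2) := by
  set μ : ℕ := Finset.univ.inf' Finset.univ_nonempty c with hμ
  classical
  set A : Set (Finset V) := {s : Finset V | s.Nonempty ∧ (G.induce (↑s : Set V)).Connected ∧
      (∑ v ∈ s, c v) ∈ Set.Ico a (a + μ)} with hA
  have hfin : A.Finite := Set.toFinite _
  have hanti : IsAntichain (· ⊆ ·) A := by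
    rintro s ⟨-, -, hs1, -⟩ t ⟨-, -, -, ht2⟩ hst hsub
    have hssub : s ⊂ t := hsub.ssubset_of_ne hst
    obtain ⟨v, hvt, hvs⟩ := Finset.exists_of_ssubset hssub
    have hμv : μ ≤ c v := Finset.inf'_le c (Finset.mem_univ v)
    have hvsum : c v ≤ ∑ u ∈ t \ s, c u :=
      Finset.single_le_sum (fun u _ => Nat.zero_le _) (Finset.mem_sdiff.2 ⟨hvt, hvs⟩)
    have hsplit : ∑ u ∈ t \ s, c u + ∑ u ∈ s, c u = ∑ u ∈ t, c u :=
      Finset.sum_sdiff hssub.subset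
    omega
  have hcard : A.ncard ≤ n.choose (n / 2) := by
    rw [← hn]
    have h1 : A.ncard = hfin.toFinset.card := by
      rw [← Set.ncard_coe_finset, hfin.coe_toFinset]
    rw [h1]
    have hanti' : IsAntichain (· ⊆ ·) (↑hfin.toFinset : Set (Finset V)) := by
      rwa [hfin.coe_toFinset]
    exact IsAntichain.sperner hanti'
  refine ⟨hcard, ?_⟩
  have hsub : connSums G c ∩ Set.Ico a (a + μ) ⊆ (fun s : Finset V => ∑ v ∈ s, c v) '' A := by
    rintro N ⟨⟨s, hs1, hs2, hs3⟩, hN⟩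
    exact ⟨s, ⟨hs1, hs2, hs3 ▸ hN⟩, hs3⟩
  calc (connSums G c ∩ Set.Ico a (a + μ)).ncard
      ≤ ((fun s : Finset V => ∑ v ∈ s, c v) '' A).ncard :=
        Set.ncard_le_ncard hsub (hfin.image _)
    _ ≤ A.ncard := Set.ncard_image_le hfin
    _ ≤ n.choose (n / 2) := hcard
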